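/- For L convex differentiable with β-Lipschitz gradient, R proper convex lsc, and stepsize τ = 1/β, the forward–backward step x₊ = prox_{τR}(x − τ∇L(x)) satisfies the sufficient decrease property F(x₊) ≤ F(x) − (β/2)‖x₊ − x‖², where F = L + R. -/

import Mathlib

open InnerProductSpace

lemma descent13 {E : Type*} [NormedAddCommGroup E] [InnerProductSpace ℝ E] [CompleteSpace E]
    (L : E → ℝ) (gL : E → E) (β : NNReal)
    (hLgrad : ∀ x, HasGradientAt L (gL x) x) (hLlip : LipschitzWith β gL)
    (x y : E) :
    L y ≤ L x + inner ℝ (gL x) (y - x) + (β : ℝ) / 2 * ‖y - x‖ ^ 2 := by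
  set c : ℝ → E := fun t => x + t • (y - x) with hc
  have hcd : ∀ t : ℝ, HasDerivAt c (y - x) t := by
    intro t
    simpa [hc] using ((hasDerivAt_id t).smul_const (y - x)).const_add x
  set g' : ℝ → ℝ := fun t => inner ℝ (gL (c t)) (y - x) with hg'
  have hgd : ∀ t : ℝ, HasDerivAt (fun s => L (c s)) (g' t) t := by
    intro t
    have := (hLgrad (c t)).hasFDerivAt.comp_hasDerivAt t (hcd t)
    simp [hg', toDual_apply_apply] at this
    exact this
  have hcont : Continuous g' := by
    have : Continuous c := by fun_prop
    exact (continuous_inner.comp ((hLlip.continuous.comp this).prodMk continuous_const))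
  have key : L (c 1) - L (c 0) = ∫ t in (0:ℝ)..1, g' t := by
    refine (intervalIntegral.integral_eq_sub_of_hasDerivAt (fun t _ => hgd t)
      (hcont.intervalIntegrable 0 1)).symm
  have hbound : ∀ t ∈ Set.Icc (0:ℝ) 1, g' t ≤ g' 0 + (β : ℝ) * ‖y - x‖ ^ 2 * t := by
    intro t ht
    have h1 : g' t - g' 0 = inner ℝ (gL (c t) - gL (c 0)) (y - x) := by
      simp [hg', inner_sub_left]
    have h2 : inner ℝ (gL (c t) - gL (c 0)) (y - x) ≤ ‖gL (c t) - gL (c 0)‖ * ‖y - x‖ :=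
      real_inner_le_norm _ _
    have h3 : ‖gL (c t) - gL (c 0)‖ ≤ (β : ℝ) * (t * ‖y - x‖) := by
      have := hLlip.dist_le_mul (c t) (c 0)
      rw [dist_eq_norm] at this
      have hcc : c t - c 0 = t • (y - x) := by simp [hc]
      calc ‖gL (c t) - gL (c 0)‖ ≤ (β : ℝ) * ‖c t - c 0‖ := by
              simpa [dist_eq_norm] using this
        _ = (β : ℝ) * (t * ‖y - x‖) := by
              rw [hcc, norm_smul, Real.norm_eq_abs, abs_of_nonneg ht.1]
    nlinarith [norm_nonneg (y - x), ht.1, (β : ℝ).toNNReal.coe_nonneg]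
  have hInt : (∫ t in (0:ℝ)..1, g' t) ≤ ∫ t in (0:ℝ)..1, (g' 0 + (β : ℝ) * ‖y - x‖ ^ 2 * t) := by
    apply intervalIntegral.integral_mono_on (by norm_num) (hcont.intervalIntegrable 0 1)
      ((continuous_const.add (continuous_const.mul continuous_id)).intervalIntegrable 0 1)
    exact hbound
  have hval : (∫ t in (0:ℝ)..1, (g' 0 + (β : ℝ) * ‖y - x‖ ^ 2 * t))
      = g' 0 + (β : ℝ) / 2 * ‖y - x‖ ^ 2 := by
    have h1 : (∫ t in (0:ℝ)..1, (g' 0 + (β : ℝ) * ‖y - x‖ ^ 2 * t))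
        = (∫ _t in (0:ℝ)..1, g' 0) + ∫ t in (0:ℝ)..1, (β : ℝ) * ‖y - x‖ ^ 2 * t :=
      intervalIntegral.integral_add intervalIntegrable_const
        (by apply Continuous.intervalIntegrable; fun_prop)
    rw [h1, intervalIntegral.integral_const, intervalIntegral.integral_const_mul, integral_id]
    norm_num
    ring
  have hc0 : c 0 = x := by simp [hc]
  have hc1 : c 1 = y := by simp [hc]
  have hfin : L y - L x ≤ g' 0 + (β : ℝ) / 2 * ‖y - x‖ ^ 2 := by
    have key2 : L y - L x = ∫ t in (0:ℝ)..1, g' t := by rw [← hc1]; rw [← hc0]; exact key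
    rw [key2, ← hval]; exact hInt
  have hg0 : g' 0 = inner ℝ (gL x) (y - x) := by rw [hg']; simp [hc0]
  rw [hg0] at hfin
  linarith

lemma prox13 {E : Type*} [NormedAddCommGroup E] [InnerProductSpace ℝ E]
    (R : E → ℝ) (hRconv : ConvexOn ℝ Set.univ R) (τ : ℝ) (hτ : 0 < τ)
    (y x xp : E)
    (hxp : IsMinOn (fun u => τ * R u + (1 / 2) * ‖u - y‖ ^ 2) Set.univ xp) :
    τ * R xp ≤ τ * R x + inner ℝ (xp - y) (x - xp) := by
  set A : ℝ := τ * (R x - R xp) + inner ℝ (xp - y) (x - xp) with hA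
  set B : ℝ := ‖x - xp‖ ^ 2 with hB
  have hBnn : 0 ≤ B := by positivity
  have hkey : ∀ t : ℝ, 0 < t → t ≤ 1 → 0 ≤ A + t / 2 * B := by
    intro t ht0 ht1
    set u : E := xp + t • (x - xp) with hu
    have hmin := (isMinOn_iff.mp hxp) u (Set.mem_univ u)
    have hRu : R u ≤ t * R x + (1 - t) * R xp := by
      have h : R (t • x + (1 - t) • xp) ≤ t * R x + (1 - t) * R xp :=
        hRconv.2 (Set.mem_univ x) (Set.mem_univ xp) ht0.le (by linarith) (by ring)
      have hueq : u = t • x + (1 - t) • xp := by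
        rw [hu]; module
      rw [hueq]; exact h
    have hnorm : ‖u - y‖ ^ 2 = ‖xp - y‖ ^ 2 + 2 * t * inner ℝ (xp - y) (x - xp)
        + t ^ 2 * B := by
      have hueq2 : u - y = (xp - y) + t • (x - xp) := by rw [hu]; abel
      rw [hueq2, norm_add_sq_real, real_inner_smul_right, norm_smul]
      rw [Real.norm_eq_abs, abs_of_nonneg ht0.le, hB]
      ring
    rw [hnorm] at hmin
    have := mul_le_mul_of_nonneg_left hRu hτ.le
    nlinarith [hmin, this, ht0, ht1, hBnn]
  have hAnn : 0 ≤ A := by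
    by_contra hneg
    push_neg at hneg
    set t : ℝ := min 1 (-A / (2 * (B + 1))) with ht
    have ht0 : 0 < t := by
      apply lt_min one_pos
      apply div_pos (by linarith) (by linarith)
    have ht1 : t ≤ 1 := min_le_left _ _
    have ht2 : t ≤ -A / (2 * (B + 1)) := min_le_right _ _
    have h2 : t * (2 * (B + 1)) ≤ -A := (le_div_iff₀ (by linarith)).mp ht2
    have := hkey t ht0 ht1
    nlinarith [this, h2, ht0, hBnn]
  rw [hA] at hAnn
  linarith

/-- For `L` convex differentiable with `β`-Lipschitz gradient, `R` proper
convex lsc (here real-valued), and stepsize `τ = 1/β`, the forward–backward step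
`x₊ = prox_{τR}(x − τ∇L x)` satisfies the sufficient decrease property
`F x₊ ≤ F x − (β/2)‖x₊ − x‖²`, where `F = L + R`. -/
theorem stmt13 (nn : ℕ)
    (L R : EuclideanSpace ℝ (Fin nn) → ℝ)
    (gL : EuclideanSpace ℝ (Fin nn) → EuclideanSpace ℝ (Fin nn))
    (β : NNReal) (hβ : 0 < β)
    (hLconv : ConvexOn ℝ Set.univ L)
    (hLgrad : ∀ x, HasGradientAt L (gL x) x)
    (hLlip : LipschitzWith β gL)
    (hRconv : ConvexOn ℝ Set.univ R)
    (hRlsc : LowerSemicontinuous R)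
    (τ : ℝ) (hτ : τ = 1 / β)
    (x xp : EuclideanSpace ℝ (Fin nn))
    (hxp : IsMinOn (fun u => τ * R u + (1 / 2) * ‖u - (x - τ • gL x)‖ ^ 2)
      Set.univ xp) :
    L xp + R xp ≤ L x + R x - ((β : ℝ) / 2) * ‖xp - x‖ ^ 2 := by
  have hβ' : (0 : ℝ) < β := hβ
  have hτ0 : 0 < τ := by rw [hτ]; positivity
  have hτβ : τ * (β : ℝ) = 1 := by rw [hτ]; field_simp
  have hdes := descent13 L gL β hLgrad hLlip x xp
  have hpx := prox13 R hRconv τ hτ0 (x - τ • gL x) x xp hxp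
  set N : ℝ := ‖xp - x‖ ^ 2 with hN
  set I : ℝ := inner ℝ (gL x) (xp - x) with hI
  have hinner : (inner ℝ (xp - (x - τ • gL x)) (x - xp) : ℝ) = -N - τ * I := by
    have he : xp - (x - τ • gL x) = (xp - x) + τ • gL x := by abel
    rw [he, inner_add_left, real_inner_smul_left]
    have h1 : (inner ℝ (xp - x) (x - xp) : ℝ) = -N := by
      rw [show x - xp = -(xp - x) by abel, inner_neg_right,
        real_inner_self_eq_norm_sq, hN]
    have h2 : (inner ℝ (gL x) (x - xp) : ℝ) = -I := by
      rw [show x - xp = -(xp - x) by abel, inner_neg_right, hI]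
    rw [h1, h2]; ring
  rw [hinner] at hpx
  have hR2 : R xp ≤ R x - (β : ℝ) * N - I := by
    have h := mul_le_mul_of_nonneg_left hpx hβ'.le
    have e1 : (β : ℝ) * (τ * R xp) = R xp := by
      rw [← mul_assoc, mul_comm (β : ℝ) τ, hτβ, one_mul]
    have e2 : (β : ℝ) * (τ * R x + (-N - τ * I)) = R x - (β : ℝ) * N - I := by
      have : (β : ℝ) * (τ * R x) = R x := by
        rw [← mul_assoc, mul_comm (β : ℝ) τ, hτβ, one_mul]
      have h3 : (β : ℝ) * (τ * I) = I := by
        rw [← mul_assoc, mul_comm (β : ℝ) τ, hτβ, one_mul]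
      nlinarith [this, h3]
    rw [e1, e2] at h
    exact h
  have hdes' : L xp ≤ L x + I + (β : ℝ) / 2 * N := by
    have hNN : ‖xp - x‖ ^ 2 = N := rfl
    simpa [hI, hNN] using hdes
  linarith
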